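/- In the ring ℤ[[X]] of formal power series, let C₂ := ∑_{m≥0} Cat_m X^{2m} (the Catalan generating function evaluated at X²) and let G := ∑_{n≥0} 2^n X^n. Then (1 − X·C₂)² · G = C₂; that is, 1/(1−2x) = C(x²)/(1 − x·C(x²))². -/

import Mathlib

open PowerSeries

/-- `C₂ = C(X²) = ∑_{m≥0} Cat_m X^{2m}`, the Catalan generating function at `X²`. -/
noncomputable def C₂ : PowerSeries ℤ :=
  PowerSeries.mk fun n => if Even n then (catalan (n / 2) : ℤ) else 0

/-- `G = 1/(1-2X) = ∑_{n≥0} 2^n X^n`. -/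
noncomputable def G : PowerSeries ℤ :=
  PowerSeries.mk fun n => (2 : ℤ) ^ n

lemma sum_even (g : ℕ → ℤ) (h : ∀ i, ¬ Even i → g i = 0) (k : ℕ) :
    ∑ i ∈ Finset.range (2 * k + 1), g i = ∑ a ∈ Finset.range (k + 1), g (2 * a) := by
  induction k with
  | zero => simp
  | succ k ih =>
    have h1 : 2 * (k + 1) + 1 = (2 * k + 1) + 1 + 1 := by ring
    have h2 : g (2 * k + 1) = 0 := h _ (by simp [Nat.even_iff])
    have h3 : 2 * (k + 1) = 2 * k + 1 + 1 := by ring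
    rw [h1, Finset.sum_range_succ, Finset.sum_range_succ, ih, h2, add_zero]
    conv_rhs => rw [Finset.sum_range_succ]
    rw [h3]

lemma coeff_C₂_sq (m : ℕ) :
    (PowerSeries.coeff (R := ℤ) m) (C₂ ^ 2) =
      if Even m then (catalan (m / 2 + 1) : ℤ) else 0 := by
  rw [sq, PowerSeries.coeff_mul, Finset.Nat.sum_antidiagonal_eq_sum_range_succ_mk]
  simp only [C₂, PowerSeries.coeff_mk]
  by_cases hm : Even m
  · obtain ⟨k, hk⟩ := hm
    have hk' : m = 2 * k := by omega
    subst hk'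
    rw [if_pos ⟨k, by ring⟩]
    rw [sum_even _ (fun i hi => by rw [if_neg hi, zero_mul]) k]
    have hcong : ∀ a ∈ Finset.range (k + 1),
        (if Even (2 * a) then (catalan (2 * a / 2) : ℤ) else 0) *
          (if Even (2 * k - 2 * a) then (catalan ((2 * k - 2 * a) / 2) : ℤ) else 0)
        = (catalan a : ℤ) * catalan (k - a) := by
      intro a ha
      simp only [Finset.mem_range] at ha
      rw [if_pos ⟨a, by ring⟩, if_pos ⟨k - a, by omega⟩]
      have e1 : 2 * a / 2 = a := by omega
      have e2 : (2 * k - 2 * a) / 2 = k - a := by omega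
      rw [e1, e2]
    rw [Finset.sum_congr rfl hcong]
    have e3 : 2 * k / 2 = k := by omega
    rw [e3, catalan_succ' k, Finset.Nat.sum_antidiagonal_eq_sum_range_succ_mk, Nat.cast_sum]
    exact Finset.sum_congr rfl (fun a _ => by push_cast; ring)
  · rw [if_neg hm]
    apply Finset.sum_eq_zero
    intro i hi
    simp only [Finset.mem_range] at hi
    rcases Nat.even_or_odd i with h1 | h1
    · rw [if_neg (by simp [Nat.even_iff, Nat.odd_iff, Nat.not_even_iff] at h1 hm ⊢; omega :
        ¬ Even (m - i)), mul_zero]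
    · rw [if_neg (by simpa [Nat.odd_iff, Nat.not_even_iff] using h1), zero_mul]

lemma hC : C₂ = 1 + PowerSeries.X ^ 2 * C₂ ^ 2 := by
  ext n
  rcases n with _ | _ | n
  · simp [C₂]
  · rw [map_add, PowerSeries.coeff_one, if_neg (by omega), sq PowerSeries.X, mul_assoc,
      PowerSeries.coeff_succ_X_mul, PowerSeries.coeff_zero_X_mul]
    simp [C₂, Nat.even_iff]
  · have h2 : n + 1 + 1 = n + 2 := rfl
    rw [h2, map_add, PowerSeries.coeff_one, if_neg (by omega)]
    rw [show (PowerSeries.coeff (R := ℤ) (n + 2)) (PowerSeries.X ^ 2 * C₂ ^ 2) =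
      (PowerSeries.coeff (R := ℤ) n) (C₂ ^ 2) from by
        simpa using PowerSeries.coeff_X_pow_mul (C₂ ^ 2) 2 n]
    rw [coeff_C₂_sq]
    simp only [C₂, PowerSeries.coeff_mk, zero_add]
    by_cases h : Even n
    · rw [if_pos h, if_pos (by simp [Nat.even_iff] at h ⊢; omega : Even (n + 2))]
      have : (n + 2) / 2 = n / 2 + 1 := by omega
      rw [this]
    · rw [if_neg h, if_neg (by simp [Nat.even_iff] at h ⊢; omega : ¬ Even (n + 2))]

lemma hG : (1 - 2 * PowerSeries.X) * G = 1 := by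
  have h1 : (1 - 2 * PowerSeries.X) * G = G - (PowerSeries.X * G + PowerSeries.X * G) := by
    ring
  rw [h1]
  ext n
  rcases n with _ | n
  · simp [G, PowerSeries.coeff_one]
  · rw [map_sub, map_add, PowerSeries.coeff_succ_X_mul, PowerSeries.coeff_one, if_neg (by omega)]
    simp [G, pow_succ]
    ring

/-- In `ℤ⟦X⟧`: `(1 - X·C(X²))² · (1/(1-2X)) = C(X²)`, i.e.
`1/(1-2x) = C(x²)/(1 - x·C(x²))²`. -/
theorem one_sub_two_x_inv_eq :
    (1 - PowerSeries.X * C₂) ^ 2 * G = C₂ := by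
  have key : (1 - PowerSeries.X * C₂) ^ 2 = (1 - 2 * PowerSeries.X) * C₂ := by
    linear_combination -hC
  rw [key, mul_comm (1 - 2 * PowerSeries.X) C₂, mul_assoc, hG, mul_one]
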